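/- Consider an ALG-schedule and a reference time t ≥ 0. Let j ∈ N(t) and let (j,k) be an E_N-edge of the borrow graph. Then ȳ_j ≥ ȳ_k, where ȳ_j = min(y_j(t), α·(p j)); moreover, if k ∉ N(t) then y_j(t) ≥ y_k(s_k). -/
import Mathlib


open MeasureTheory Set

open scoped Classical

noncomputable section

variable {J : Type*}

/-- Total work done on job `j` by time `u` under the schedule `σ`. -/
def workDone (σ : ℝ → J → ℝ) (j : J) (u : ℝ) : ℝ := ∫ v in (0:ℝ)..u, σ v j

/-- Remaining processing time of job `j` at time `u`. -/
def remT (p : J → ℝ) (σ : ℝ → J → ℝ) (j : J) (u : ℝ) : ℝ := p j - workDone σ j u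

/-- Completion time of job `j`: the least `u` with `workDone σ j u = p j`,
    and `⊤` if the job never completes. -/
def cTime (p : J → ℝ) (σ : ℝ → J → ℝ) (j : J) : EReal :=
  sInf ((fun v : ℝ => (v : EReal)) '' {v : ℝ | workDone σ j v = p j})

/-- Job `j` is available at time `u`: released and not yet completed. -/
def availAt (r p : J → ℝ) (σ : ℝ → J → ℝ) (u : ℝ) (j : J) : Prop :=
  r j ≤ u ∧ (u : EReal) < cTime p σ j

/-- Job `j` is processed at time `u`. -/
def procAt (σ : ℝ → J → ℝ) (u : ℝ) (j : J) : Prop := 0 < σ u j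

/-- Job `j` is non-clairvoyant at time `u`. -/
def ncAt (r p : J → ℝ) (α : ℝ) (σ : ℝ → J → ℝ) (u : ℝ) (j : J) : Prop :=
  availAt r p σ u j ∧ workDone σ j u ≤ α * p j

/-- Job `j` is clairvoyant at time `u`. -/
def clAt (r p : J → ℝ) (α : ℝ) (σ : ℝ → J → ℝ) (u : ℝ) (j : J) : Prop :=
  availAt r p σ u j ∧ α * p j < workDone σ j u

/-- The time at which job `j` emits its signal: the least `u` with
    `workDone σ j u = α * p j`. -/
def emitT (p : J → ℝ) (α : ℝ) (σ : ℝ → J → ℝ) (j : J) : ℝ :=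
  sInf {u : ℝ | workDone σ j u = α * p j}

/-- Data of an instance: nonnegative release dates, positive processing times
    and `α ∈ (0,1)`. -/
structure IsInstance (r p : J → ℝ) (α : ℝ) : Prop where
  r_nonneg : ∀ j, 0 ≤ r j
  p_pos : ∀ j, 0 < p j
  alpha_mem : α ∈ Set.Ioo (0 : ℝ) 1

/-- `σ` is a (feasible, preemptive, single machine) schedule. -/
structure IsSchedule [Fintype J] (r p : J → ℝ) (σ : ℝ → J → ℝ) : Prop where
  meas : ∀ j, Measurable fun u => σ u j
  nonneg : ∀ u j, 0 ≤ σ u j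
  sum_le_one : ∀ u, ∑ j, σ u j ≤ 1
  zero_before_release : ∀ u j, u < r j → σ u j = 0
  workDone_le : ∀ u j, workDone σ j u ≤ p j

/-- A schedule is non-idling if it uses the full machine capacity whenever
    some job is available. -/
def NonIdling [Fintype J] (r p : J → ℝ) (σ : ℝ → J → ℝ) : Prop :=
  ∀ u, (∃ j, availAt r p σ u j) → ∑ j, σ u j = 1

/-- The SRPT condition at time `u`: `Cl(u) ≠ ∅` and
    `min_{j ∈ Cl(u)} p_j(u) ≤ ((1-α)/α) · min_{j ∈ N(u)} y_j(u)`
    (the minimum over the empty set being `+∞`). -/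
def SrptCond (r p : J → ℝ) (α : ℝ) (σ : ℝ → J → ℝ) (u : ℝ) : Prop :=
  ∃ k, clAt r p α σ u k ∧
    ∀ j, ncAt r p α σ u j → remT p σ k u ≤ ((1 - α) / α) * workDone σ j u

/-- `k` is a clairvoyant job of minimal remaining processing time at `u`,
    emitting last among those. -/
def IsSrptChoice (r p : J → ℝ) (α : ℝ) (σ : ℝ → J → ℝ) (u : ℝ) (k : J) : Prop :=
  clAt r p α σ u k ∧
    (∀ j, clAt r p α σ u j → remT p σ k u ≤ remT p σ j u) ∧
    (∀ j, clAt r p α σ u j → remT p σ j u = remT p σ k u →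
      emitT p α σ j ≤ emitT p α σ k)

/-- `j` is a non-clairvoyant job with minimal progress at time `u`. -/
def IsMinNc (r p : J → ℝ) (α : ℝ) (σ : ℝ → J → ℝ) (u : ℝ) (j : J) : Prop :=
  ncAt r p α σ u j ∧ ∀ j', ncAt r p α σ u j' → workDone σ j u ≤ workDone σ j' u

/-- `σ` is an ALG-schedule: non-idling, and at any time with available jobs it
    either runs a single clairvoyant job of shortest remaining processing time
    (breaking ties by latest emission) when the SRPT condition holds, or it runs
    exactly the non-clairvoyant jobs of minimal progress at equal rates. -/
structure IsALG [Fintype J] (r p : J → ℝ) (α : ℝ) (σ : ℝ → J → ℝ) : Prop where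
  sched : IsSchedule r p σ
  nonidling : NonIdling r p σ
  srpt_branch : ∀ u, (∃ j, availAt r p σ u j) → SrptCond r p α σ u →
    ∃ k, IsSrptChoice r p α σ u k ∧ ∀ j, j ≠ k → σ u j = 0
  setf_branch : ∀ u, (∃ j, availAt r p σ u j) → ¬ SrptCond r p α σ u →
    (∀ j, procAt σ u j → IsMinNc r p α σ u j) ∧
    (∀ j j', IsMinNc r p α σ u j → IsMinNc r p α σ u j' → σ u j = σ u j')

/-- Right endpoint `min (C_j, t)` of the lifetime of `j` w.r.t. reference time `t`. -/
def lifeEnd (p : J → ℝ) (σ : ℝ → J → ℝ) (t : ℝ) (j : J) : ℝ :=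
  (min (cTime p σ j) (t : EReal)).toReal

/-- The lifetime `I_j = [r j, min (C_j, t)]` of job `j`. -/
def lifetime (r p : J → ℝ) (σ : ℝ → J → ℝ) (t : ℝ) (j : J) : Set ℝ :=
  Set.Icc (r j) (lifeEnd p σ t j)

/-- `E_N`-edge of the borrow graph: `i` is processed at some time of `I_j`
    while being non-clairvoyant. -/
def ENedge (r p : J → ℝ) (α : ℝ) (σ : ℝ → J → ℝ) (t : ℝ) (j i : J) : Prop :=
  ∃ u ∈ lifetime r p σ t j, procAt σ u i ∧ ncAt r p α σ u i

/-- `E_C`-edge of the borrow graph: `i` is processed at some time of `I_j`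
    while being clairvoyant. -/
def ECedge (r p : J → ℝ) (α : ℝ) (σ : ℝ → J → ℝ) (t : ℝ) (j i : J) : Prop :=
  ∃ u ∈ lifetime r p σ t j, procAt σ u i ∧ clAt r p α σ u i

/-- Edge of the borrow graph `G_B`. -/
def borrowEdge (r p : J → ℝ) (α : ℝ) (σ : ℝ → J → ℝ) (t : ℝ) (j i : J) : Prop :=
  ENedge r p α σ t j i ∨ ECedge r p α σ t j i

/-- `reaches j i` iff `i ∈ R_j`, i.e. `i` is reachable from `j` in the borrow
    graph (`j` itself included). -/
def reaches (r p : J → ℝ) (α : ℝ) (σ : ℝ → J → ℝ) (t : ℝ) : J → J → Prop :=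
  Relation.ReflTransGen (borrowEdge r p α σ t)

/-- Truncated progress `ȳ_j = min (y_j(t), α p_j)`. -/
def truncY (p : J → ℝ) (α : ℝ) (σ : ℝ → J → ℝ) (t : ℝ) (j : J) : ℝ :=
  min (workDone σ j t) (α * p j)

end


section Aux

variable {J : Type*} [Fintype J] {r p : J → ℝ} {α : ℝ} {σ : ℝ → J → ℝ}

lemma sigma_le_one (hs : IsSchedule r p σ) (u : ℝ) (j : J) : σ u j ≤ 1 :=
  le_trans (Finset.single_le_sum (fun i _ => hs.nonneg u i) (Finset.mem_univ j)) (hs.sum_le_one u)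

lemma intInt (hs : IsSchedule r p σ) (j : J) (a b : ℝ) :
    IntervalIntegrable (fun u => σ u j) volume a b := by
  apply IntervalIntegrable.mono_fun' (g := fun _ => (1:ℝ)) intervalIntegrable_const
    (hs.meas j).aestronglyMeasurable
  filter_upwards with x
  simpa [Real.norm_eq_abs, abs_of_nonneg (hs.nonneg x j)] using sigma_le_one hs x j

lemma workDone_mono (hs : IsSchedule r p σ) (j : J) : Monotone (workDone σ j) := by
  intro a b hab
  have h := intervalIntegral.integral_add_adjacent_intervals (intInt hs j 0 a) (intInt hs j a b)
  have h2 : 0 ≤ ∫ v in a..b, σ v j :=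
    intervalIntegral.integral_nonneg hab (fun x _ => hs.nonneg x j)
  simp only [workDone]
  linarith [h, h2]

lemma workDone_cont (hs : IsSchedule r p σ) (j : J) : Continuous (workDone σ j) :=
  intervalIntegral.continuous_primitive (fun a b => intInt hs j a b) 0

omit [Fintype J] in
lemma workDone_zero (j : J) : workDone σ j 0 = 0 := by
  simp [workDone]

/-- If `j` has remaining work at time `v`, it has not completed by `v`. -/
lemma lt_cTime (hs : IsSchedule r p σ) {j : J} {v : ℝ}
    (hw : workDone σ j v < p j) : (v : EReal) < cTime p σ j := by
  have hc : ContinuousAt (workDone σ j) v := (workDone_cont hs j).continuousAt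
  have hev : ∀ᶠ x in nhds v, workDone σ j x < p j := hc.eventually_lt continuousAt_const hw
  rcases Metric.eventually_nhds_iff.mp hev with ⟨ε, hε, hball⟩
  have hle : ((v + ε/2 : ℝ) : EReal) ≤ cTime p σ j := by
    apply le_sInf
    rintro b ⟨x, hx, rfl⟩
    simp only [Set.mem_setOf_eq] at hx
    have hxv : v + ε/2 ≤ x := by
      by_contra hlt
      push_neg at hlt
      rcases le_or_gt x v with h1 | h1
      · exact absurd hx (ne_of_lt (lt_of_le_of_lt (workDone_mono hs j h1) hw))
      · have : dist x v < ε := by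
          rw [Real.dist_eq, abs_of_pos (sub_pos.mpr h1)]; linarith
        exact absurd hx (ne_of_lt (hball this))
    show ((v + ε/2 : ℝ) : EReal) ≤ ((x:ℝ) : EReal)
    exact_mod_cast hxv
  refine lt_of_lt_of_le ?_ hle
  exact_mod_cast (by linarith : v < v + ε/2)

/-- If a nonclairvoyant job `k` is processed at `v` and `j` is also
nonclairvoyant at `v`, then `k` has minimal progress, so `y_k(v) ≤ y_j(v)`. -/
lemma proc_nc_min (halg : IsALG r p α σ) {v : ℝ} {k j : J}
    (hk : ncAt r p α σ v k) (hjv : ncAt r p α σ v j) (hp : procAt σ v k) :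
    workDone σ k v ≤ workDone σ j v := by
  have hA : ∃ i, availAt r p σ v i := ⟨j, hjv.1⟩
  by_cases hS : SrptCond r p α σ v
  · rcases halg.srpt_branch v hA hS with ⟨k', ⟨hk', _, _⟩, hzero⟩
    by_cases hkk : k = k'
    · subst hkk; exact absurd hk'.2 (not_lt.mpr hk.2)
    · exact absurd hp (by simp [procAt, hzero k hkk])
  · exact ((halg.setf_branch v hA hS).1 k hp).2 j hjv

/-- A nonclairvoyant job with non-minimal progress is not processed. -/
lemma sigma_eq_zero (halg : IsALG r p α σ) {v : ℝ} {k j : J}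
    (hk : ncAt r p α σ v k) (hjv : ncAt r p α σ v j)
    (hlt : workDone σ j v < workDone σ k v) : σ v k = 0 := by
  by_contra hne
  have hp : procAt σ v k := lt_of_le_of_ne (halg.sched.nonneg v k) (Ne.symm hne)
  exact absurd (proc_nc_min halg hk hjv hp) (not_le.mpr hlt)

end Aux

/-- If `j ∈ N(t)` and `(j,k)` is an `E_N`-edge of the borrow
graph, then `ȳ_j ≥ ȳ_k`; moreover if `k ∉ N(t)` then `y_j(t) ≥ y_k(s_k)`. -/
theorem stmt12 {J : Type*} [Fintype J] {r p : J → ℝ} {α : ℝ} {σ : ℝ → J → ℝ}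
    (hinst : IsInstance r p α) (halg : IsALG r p α σ) (t : ℝ) (ht : 0 ≤ t)
    (j k : J) (hj : ncAt r p α σ t j) (he : ENedge r p α σ t j k) :
    truncY p α σ t k ≤ truncY p α σ t j ∧
      (¬ ncAt r p α σ t k → workDone σ k (emitT p α σ k) ≤ workDone σ j t) := by
  obtain ⟨u, hu, hpk, hnk⟩ := he
  have hs := halg.sched
  have ymono : ∀ i : J, Monotone (workDone σ i) := fun i => workDone_mono hs i
  have hppos := hinst.p_pos k
  have hα0 := hinst.alpha_mem.1
  have hα1 := hinst.alpha_mem.2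
  have hαp : α * p k < p k := by nlinarith
  have htC : (t : EReal) < cTime p σ j := hj.1.2
  have hend : lifeEnd p σ t j = t := by
    rw [lifeEnd, min_eq_right (le_of_lt htC)]
    exact EReal.toReal_coe t
  obtain ⟨hru, hult⟩ := Set.mem_Icc.mp hu
  rw [hend] at hult
  -- j is nonclairvoyant throughout [u, t]
  have hjnc : ∀ v, u ≤ v → v ≤ t → ncAt r p α σ v j := by
    intro v h1 h2
    refine ⟨⟨le_trans hru h1, lt_of_le_of_lt ?_ htC⟩, le_trans (ymono j h2) hj.2⟩
    exact_mod_cast h2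
  have hku : workDone σ k u ≤ workDone σ j u :=
    proc_nc_min halg hnk (hjnc u le_rfl hult) hpk
  -- Main claim : min (y_k t) (α p_k) ≤ y_j t
  have main : min (workDone σ k t) (α * p k) ≤ workDone σ j t := by
    set S : Set ℝ :=
      Set.Icc u t ∩ {v | min (workDone σ k v) (α * p k) ≤ workDone σ j v} with hSdef
    have hScl : IsClosed S :=
      isClosed_Icc.inter
        (isClosed_le ((workDone_cont hs k).min continuous_const) (workDone_cont hs j))
    have hSne : S.Nonempty := ⟨u, ⟨le_rfl, hult⟩, le_trans (min_le_left _ _) hku⟩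
    have hSbd : BddAbove S := ⟨t, fun v hv => hv.1.2⟩
    set w := sSup S with hwdef
    have hwS : w ∈ S := hScl.csSup_mem hSne hSbd
    obtain ⟨⟨huw, hwt⟩, hgw⟩ := hwS
    by_contra hgt
    push_neg at hgt
    rcases le_or_gt (α * p k) (workDone σ k w) with hA | hB
    · -- the truncation already saturated at `w`
      have h1 : α * p k ≤ workDone σ j w :=
        le_trans (min_eq_right hA).symm.le hgw
      have h2 : workDone σ j w ≤ workDone σ j t := ymono j hwt
      exact absurd (le_trans (min_le_right _ _) (le_trans h1 h2)) (not_le.mpr hgt)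
    · -- y_k w < α p_k
      set T : Set ℝ := Set.Icc w t ∩ {v | workDone σ k v ≤ α * p k} with hTdef
      have hTcl : IsClosed T :=
        isClosed_Icc.inter (isClosed_le (workDone_cont hs k) continuous_const)
      have hTne : T.Nonempty := ⟨w, ⟨le_rfl, hwt⟩, le_of_lt hB⟩
      have hTbd : BddAbove T := ⟨t, fun v hv => hv.1.2⟩
      set w' := sSup T with hw'def
      have hw'T : w' ∈ T := hTcl.csSup_mem hTne hTbd
      obtain ⟨⟨hww', hw't⟩, hyw'⟩ := hw'T
      -- k is not processed on (w, w')
      have hzero : ∀ v ∈ Set.Ioo w w', σ v k = 0 := by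
        rintro v ⟨hv1, hv2⟩
        have hvt : v ≤ t := le_trans (le_of_lt hv2) hw't
        have huv : u ≤ v := le_trans huw (le_of_lt hv1)
        have hvnotS : v ∉ S := fun hvS => absurd (le_csSup hSbd hvS) (not_le.mpr hv1)
        have hgv : workDone σ j v < min (workDone σ k v) (α * p k) := by
          by_contra h; push_neg at h
          exact hvnotS ⟨⟨huv, hvt⟩, h⟩
        have hykv : workDone σ k v ≤ α * p k := le_trans (ymono k (le_of_lt hv2)) hyw'
        have hkv : ncAt r p α σ v k :=
          ⟨⟨le_trans hnk.1.1 huv, lt_cTime hs (lt_of_le_of_lt hykv hαp)⟩, hykv⟩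
        exact sigma_eq_zero halg hkv (hjnc v huv hvt)
          (lt_of_lt_of_le hgv (min_le_left _ _))
      -- hence y_k w' = y_k w
      have hint : workDone σ k w' - workDone σ k w = ∫ v in w..w', σ v k := by
        have h := intervalIntegral.integral_add_adjacent_intervals
          (intInt hs k 0 w) (intInt hs k w w')
        simp only [workDone]
        linarith
      have hzint : (∫ v in w..w', σ v k) = 0 := by
        rw [show (0:ℝ) = ∫ _ in w..w', (0:ℝ) by simp]
        apply intervalIntegral.integral_congr_ae
        have h1 : ∀ᵐ v : ℝ, v ≠ w' := by
          rw [MeasureTheory.ae_iff]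
          simp
        filter_upwards [h1] with v hv hvm
        rw [Set.uIoc_of_le hww'] at hvm
        exact hzero v ⟨hvm.1, lt_of_le_of_ne hvm.2 hv⟩
      have hyeq : workDone σ k w' = workDone σ k w := by linarith [hint, hzint]
      rcases eq_or_lt_of_le hw't with heq | hlt
      · -- w' = t : the main claim holds at t, contradiction
        have e1 : workDone σ k t = workDone σ k w := by rw [← heq]; exact hyeq
        have e2 : workDone σ k w ≤ workDone σ j w :=
          le_trans (min_eq_left (le_of_lt hB)).symm.le hgw
        have e3 : workDone σ j w ≤ workDone σ j t := ymono j hwt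
        have e4 : min (workDone σ k t) (α * p k) ≤ workDone σ k t := min_le_left _ _
        linarith
      · -- w' < t : contradiction by right-continuity at w'
        have hge : α * p k ≤ workDone σ k w' := by
          refine ge_of_tendsto ((workDone_cont hs k).continuousAt.tendsto.mono_left
            (nhdsWithin_le_nhds (s := Set.Ioi w'))) ?_
          filter_upwards [Ioc_mem_nhdsGT_of_mem ⟨le_rfl, hlt⟩] with v hv
          by_contra hc; push_neg at hc
          have hvT : v ∈ T := ⟨⟨le_trans hww' (le_of_lt hv.1), hv.2⟩, le_of_lt hc⟩
          exact absurd (le_csSup hTbd hvT) (not_le.mpr hv.1)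
        linarith
  constructor
  · -- first conclusion
    have hj2 : truncY p α σ t j = workDone σ j t := min_eq_left hj.2
    rw [truncY, hj2]
    exact main
  · -- second conclusion
    intro hknt
    have hrkt : r k ≤ t := le_trans hnk.1.1 hult
    have hge : α * p k ≤ workDone σ k t := by
      by_contra h; push_neg at h
      exact hknt ⟨⟨hrkt, lt_cTime hs (lt_trans h hαp)⟩, le_of_lt h⟩
    have hEcl : IsClosed {v : ℝ | workDone σ k v = α * p k} :=
      isClosed_eq (workDone_cont hs k) continuous_const
    have hEne : {v : ℝ | workDone σ k v = α * p k}.Nonempty := by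
      have hmem : α * p k ∈ Set.Icc (workDone σ k 0) (workDone σ k t) := by
        rw [workDone_zero]
        exact ⟨by positivity, hge⟩
      obtain ⟨v, _, hv⟩ := intermediate_value_Icc ht (workDone_cont hs k).continuousOn hmem
      exact ⟨v, hv⟩
    have hEbd : BddBelow {v : ℝ | workDone σ k v = α * p k} := by
      refine ⟨0, fun v hv => ?_⟩
      by_contra h; push_neg at h
      have h2 : workDone σ k v ≤ workDone σ k 0 := ymono k (le_of_lt h)
      rw [workDone_zero] at h2
      rw [Set.mem_setOf_eq] at hv
      nlinarith
    have hattain : workDone σ k (emitT p α σ k) = α * p k :=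
      hEcl.csInf_mem hEne hEbd
    rw [emitT] at hattain ⊢
    rw [hattain]
    calc α * p k = min (workDone σ k t) (α * p k) := (min_eq_right hge).symm
      _ ≤ workDone σ j t := main
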